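/- If a hypercomplex structure (quaternionic triple of complex structures J^α with J^α J^β = −δ^{αβ} Id + ε^{αβγ} J^γ) is covariantly constant with respect to two torsion-free affine connections ∇ and ∇', then ∇ = ∇'. Equivalently, the torsionless connection preserving a hypercomplex structure (when it exists) is unique. -/
import Mathlib


noncomputable section

/-- The totally antisymmetric symbol on three indices, `ε¹²³ = 1`
(here indices run over `Fin 3`, so `ε 0 1 2 = 1`). -/
def eps3 : Fin 3 → Fin 3 → Fin 3 → ℝ := fun α β γ =>
  if (α, β, γ) = (0, 1, 2) ∨ (α, β, γ) = (1, 2, 0) ∨ (α, β, γ) = (2, 0, 1) then 1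
  else if (α, β, γ) = (0, 2, 1) ∨ (α, β, γ) = (2, 1, 0) ∨ (α, β, γ) = (1, 0, 2) then -1
  else 0

/-- Obata: on a manifold of dimension `4r` (in coordinates) carrying a
hypercomplex structure, i.e. a triple `J^α` of complex structures satisfying the
quaternionic algebra `J^α J^β = −δ^{αβ} Id + ε^{αβγ} J^γ`, any two torsion-free affine
connections `Γ`, `Γ'` with respect to which the `J^α` are covariantly constant
coincide: the torsionless connection preserving a hypercomplex structure is unique.
(`Γ x μ ν ρ` denotes `Γ_{μν}^ρ`, and covariant constancy reads
`∂_μ (J^α)_ν{}^ρ − Γ_{μν}^σ (J^α)_σ{}^ρ + Γ_{μσ}^ρ (J^α)_ν{}^σ = 0`.) -/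
theorem obata_connection_uniqueness
    (r : ℕ)
    (J : Fin 3 → (Fin (4 * r) → ℝ) → Fin (4 * r) → Fin (4 * r) → ℝ)
    (hquat : ∀ (x : Fin (4 * r) → ℝ) (α β : Fin 3) (X Y : Fin (4 * r)),
      ∑ Z : Fin (4 * r), J α x X Z * J β x Z Y
        = -((if α = β then 1 else 0) * (if X = Y then 1 else 0))
          + ∑ γ : Fin 3, eps3 α β γ * J γ x X Y)
    (Γ Γ' : (Fin (4 * r) → ℝ) → Fin (4 * r) → Fin (4 * r) → Fin (4 * r) → ℝ)
    (hΓtf : ∀ x μ ν ρ, Γ x μ ν ρ = Γ x ν μ ρ)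
    (hΓ'tf : ∀ x μ ν ρ, Γ' x μ ν ρ = Γ' x ν μ ρ)
    (hΓJ : ∀ (x : Fin (4 * r) → ℝ) (α : Fin 3) (μ ν ρ : Fin (4 * r)),
      fderiv ℝ (fun y => J α y ν ρ) x (Pi.single μ 1)
        - (∑ σ : Fin (4 * r), Γ x μ ν σ * J α x σ ρ)
        + (∑ σ : Fin (4 * r), Γ x μ σ ρ * J α x ν σ) = 0)
    (hΓ'J : ∀ (x : Fin (4 * r) → ℝ) (α : Fin 3) (μ ν ρ : Fin (4 * r)),
      fderiv ℝ (fun y => J α y ν ρ) x (Pi.single μ 1)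
        - (∑ σ : Fin (4 * r), Γ' x μ ν σ * J α x σ ρ)
        + (∑ σ : Fin (4 * r), Γ' x μ σ ρ * J α x ν σ) = 0) :
    Γ = Γ' := by
  funext x μ₀ ν₀ ρ₀
  -- The difference tensor
  set D : Fin (4 * r) → Fin (4 * r) → Fin (4 * r) → ℝ :=
    fun μ ν ρ => Γ x μ ν ρ - Γ' x μ ν ρ with hD
  have hDsymm : ∀ μ ν ρ, D μ ν ρ = D ν μ ρ := by
    intro μ ν ρ
    simp only [hD, hΓtf x μ ν ρ, hΓ'tf x μ ν ρ]
  -- key identity: J ∘ D(μ, ·) = D(μ, ·) ∘ J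
  have key : ∀ (α : Fin 3) (μ ν ρ : Fin (4 * r)),
      ∑ σ, D μ ν σ * J α x σ ρ = ∑ σ, D μ σ ρ * J α x ν σ := by
    intro α μ ν ρ
    have h1 := hΓJ x α μ ν ρ
    have h2 := hΓ'J x α μ ν ρ
    simp only [hD, sub_mul, Finset.sum_sub_distrib]
    linarith
  have key2 : ∀ (α : Fin 3) (μ ν ρ : Fin (4 * r)),
      ∑ σ, J α x ν σ * D μ σ ρ = ∑ σ, D μ ν σ * J α x σ ρ := by
    intro α μ ν ρ
    rw [key α μ ν ρ]
    exact Finset.sum_congr rfl fun σ _ => mul_comm _ _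
  -- products of the complex structures
  have hJ01 : ∀ X Y : Fin (4 * r), ∑ Z, J 0 x X Z * J 1 x Z Y = J 2 x X Y := by
    intro X Y
    rw [hquat x 0 1 X Y, Fin.sum_univ_three]
    simp [eps3, Prod.ext_iff]
  have hJ10 : ∀ X Y : Fin (4 * r), ∑ Z, J 1 x X Z * J 0 x Z Y = -J 2 x X Y := by
    intro X Y
    rw [hquat x 1 0 X Y, Fin.sum_univ_three]
    simp [eps3, Prod.ext_iff]
  have hJ22 : ∀ X Y : Fin (4 * r), ∑ Z, J 2 x X Z * J 2 x Z Y
      = -(if X = Y then (1:ℝ) else 0) := by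
    intro X Y
    rw [hquat x 2 2 X Y, Fin.sum_univ_three]
    simp [eps3, Prod.ext_iff]
  -- the double sum E, computed two ways
  have way1 : ∀ μ ν ρ : Fin (4 * r),
      (∑ σ, ∑ τ, J 0 x μ σ * (J 1 x ν τ * D σ τ ρ))
        = ∑ σ, D μ ν σ * J 2 x σ ρ := by
    intro μ ν ρ
    calc (∑ σ, ∑ τ, J 0 x μ σ * (J 1 x ν τ * D σ τ ρ))
        = ∑ σ, J 0 x μ σ * ∑ τ, J 1 x ν τ * D σ τ ρ := by
          simp [Finset.mul_sum]
      _ = ∑ σ, J 0 x μ σ * ∑ τ, D σ ν τ * J 1 x τ ρ := by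
          exact Finset.sum_congr rfl fun σ _ => by rw [key2 1 σ ν ρ]
      _ = ∑ τ, (∑ σ, J 0 x μ σ * D σ ν τ) * J 1 x τ ρ := by
          simp only [Finset.mul_sum, Finset.sum_mul]
          rw [Finset.sum_comm]
          exact Finset.sum_congr rfl fun τ _ => Finset.sum_congr rfl fun σ _ => by ring
      _ = ∑ τ, (∑ σ, D μ ν σ * J 0 x σ τ) * J 1 x τ ρ := by
          refine Finset.sum_congr rfl fun τ _ => ?_
          congr 1
          calc ∑ σ, J 0 x μ σ * D σ ν τ
              = ∑ σ, J 0 x μ σ * D ν σ τ :=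
                Finset.sum_congr rfl fun σ _ => by rw [hDsymm σ ν τ]
            _ = ∑ σ, D ν μ σ * J 0 x σ τ := key2 0 ν μ τ
            _ = ∑ σ, D μ ν σ * J 0 x σ τ :=
                Finset.sum_congr rfl fun σ _ => by rw [hDsymm ν μ σ]
      _ = ∑ σ, D μ ν σ * ∑ τ, J 0 x σ τ * J 1 x τ ρ := by
          simp only [Finset.mul_sum, Finset.sum_mul]
          rw [Finset.sum_comm]
          exact Finset.sum_congr rfl fun τ _ => Finset.sum_congr rfl fun σ _ => by ring
      _ = ∑ σ, D μ ν σ * J 2 x σ ρ :=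
          Finset.sum_congr rfl fun σ _ => by rw [hJ01 σ ρ]
  have way2 : ∀ μ ν ρ : Fin (4 * r),
      (∑ σ, ∑ τ, J 0 x μ σ * (J 1 x ν τ * D σ τ ρ))
        = -∑ σ, D μ ν σ * J 2 x σ ρ := by
    intro μ ν ρ
    calc (∑ σ, ∑ τ, J 0 x μ σ * (J 1 x ν τ * D σ τ ρ))
        = ∑ τ, J 1 x ν τ * ∑ σ, J 0 x μ σ * D σ τ ρ := by
          simp only [Finset.mul_sum]
          rw [Finset.sum_comm]
          exact Finset.sum_congr rfl fun τ _ => Finset.sum_congr rfl fun σ _ => by ring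
      _ = ∑ τ, J 1 x ν τ * ∑ σ, D μ τ σ * J 0 x σ ρ := by
          refine Finset.sum_congr rfl fun τ _ => ?_
          congr 1
          calc ∑ σ, J 0 x μ σ * D σ τ ρ
              = ∑ σ, J 0 x μ σ * D τ σ ρ :=
                Finset.sum_congr rfl fun σ _ => by rw [hDsymm σ τ ρ]
            _ = ∑ σ, D τ μ σ * J 0 x σ ρ := key2 0 τ μ ρ
            _ = ∑ σ, D μ τ σ * J 0 x σ ρ :=
                Finset.sum_congr rfl fun σ _ => by rw [hDsymm τ μ σ]
      _ = ∑ σ, (∑ τ, J 1 x ν τ * D μ τ σ) * J 0 x σ ρ := by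
          simp only [Finset.mul_sum, Finset.sum_mul]
          rw [Finset.sum_comm]
          exact Finset.sum_congr rfl fun σ _ => Finset.sum_congr rfl fun τ _ => by ring
      _ = ∑ σ, (∑ τ, D μ ν τ * J 1 x τ σ) * J 0 x σ ρ :=
          Finset.sum_congr rfl fun σ _ => by rw [key2 1 μ ν σ]
      _ = ∑ τ, D μ ν τ * ∑ σ, J 1 x τ σ * J 0 x σ ρ := by
          simp only [Finset.mul_sum, Finset.sum_mul]
          rw [Finset.sum_comm]
          exact Finset.sum_congr rfl fun τ _ => Finset.sum_congr rfl fun σ _ => by ring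
      _ = -∑ σ, D μ ν σ * J 2 x σ ρ := by
          rw [← Finset.sum_neg_distrib]
          exact Finset.sum_congr rfl fun σ _ => by rw [hJ10 σ ρ]; ring
  have hL : ∀ μ ν ρ : Fin (4 * r), ∑ σ, D μ ν σ * J 2 x σ ρ = 0 := by
    intro μ ν ρ
    have := (way1 μ ν ρ).symm.trans (way2 μ ν ρ)
    linarith
  -- apply J 2 once more
  have hzero : ∀ μ ν ρ : Fin (4 * r), D μ ν ρ = 0 := by
    intro μ ν ρ
    have h0 : ∑ τ, (∑ σ, D μ ν σ * J 2 x σ τ) * J 2 x τ ρ = 0 := by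
      simp [hL]
    have h1 : ∑ τ, (∑ σ, D μ ν σ * J 2 x σ τ) * J 2 x τ ρ
        = ∑ σ, D μ ν σ * ∑ τ, J 2 x σ τ * J 2 x τ ρ := by
      simp only [Finset.mul_sum, Finset.sum_mul]
      rw [Finset.sum_comm]
      exact Finset.sum_congr rfl fun σ _ => Finset.sum_congr rfl fun τ _ => by ring
    rw [h1] at h0
    have h2 : ∑ σ, D μ ν σ * ∑ τ, J 2 x σ τ * J 2 x τ ρ = -D μ ν ρ := by
      calc ∑ σ, D μ ν σ * ∑ τ, J 2 x σ τ * J 2 x τ ρ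
          = ∑ σ, D μ ν σ * -(if σ = ρ then (1:ℝ) else 0) :=
            Finset.sum_congr rfl fun σ _ => by rw [hJ22 σ ρ]
        _ = -D μ ν ρ := by simp [mul_ite]
    rw [h2] at h0
    linarith
  have := hzero μ₀ ν₀ ρ₀
  simp only [hD] at this
  linarith
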